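/- Let A, B ∈ SO(3) be rotations by angles α and β. If A has rotation angle α, then the commutator [A,B] = ABA⁻¹B⁻¹ is a rotation whose angle θ satisfies |sin(θ/2)| ≤ C|sin(α/2)| for a constant C depending only on B; in particular as α → 0, the rotation angle of [A,B] is O(α). -/

import Mathlib

open Quaternion

/-- Let `B` be a rotation, represented by a unit quaternion `p`.  There is a constant `C > 0`
depending only on `B` such that for every rotation `A` by angle `α` (represented by the unit
quaternion `q = cos(α/2) + sin(α/2)·v` for a unit purely imaginary `v`), the rotation angle
`θ` of the commutator `[A,B] = ABA⁻¹B⁻¹` satisfies `|sin(θ/2)| ≤ C·|sin(α/2)|`; here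
`|sin(θ/2)| = ‖Im(q p q⁻¹ p⁻¹)‖` since `cos(θ/2) = |Re(q p q⁻¹ p⁻¹)|` for unit quaternions. -/
theorem stmt_13 (p : ℍ[ℝ]) (hp : ‖p‖ = 1) :
    ∃ C > (0 : ℝ), ∀ (α : ℝ) (v : ℍ[ℝ]), v.re = 0 → ‖v‖ = 1 →
      let q : ℍ[ℝ] := (Real.cos (α / 2) : ℍ[ℝ]) + Real.sin (α / 2) • v
      ‖(q * p * q⁻¹ * p⁻¹).im‖ ≤ C * |Real.sin (α / 2)| := by
  refine ⟨2, by norm_num, ?_⟩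
  intro α v hv hvn q
  set c := Real.cos (α/2) with hc
  set s := Real.sin (α/2) with hs
  -- norm of q
  have hq : ‖q‖ = 1 := by
    have h1 : Quaternion.normSq q = 1 := by
      have hv1 : Quaternion.normSq v = 1 := by
        rw [Quaternion.normSq_eq_norm_mul_self, hvn]; ring
      rw [Quaternion.normSq_def'] at hv1 ⊢
      simp only [q, Quaternion.re_add, Quaternion.imI_add, Quaternion.imJ_add,
        Quaternion.imK_add, Quaternion.re_coe, Quaternion.imI_coe, Quaternion.imJ_coe,
        Quaternion.imK_coe, Quaternion.re_smul, Quaternion.imI_smul, Quaternion.imJ_smul,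
        Quaternion.imK_smul, hv, smul_eq_mul, mul_zero, add_zero, zero_add]
      have := Real.sin_sq_add_cos_sq (α/2)
      nlinarith [hv1, this]
    have := Quaternion.normSq_eq_norm_mul_self q
    nlinarith [norm_nonneg q]
  have hq0 : q ≠ 0 := by intro h; rw [h, norm_zero] at hq; norm_num at hq
  have hp0 : p ≠ 0 := by intro h; rw [h, norm_zero] at hp; norm_num at hp
  have hqi : q * q⁻¹ = 1 := mul_inv_cancel₀ hq0
  have hpi : p * p⁻¹ = 1 := mul_inv_cancel₀ hp0
  have key : q * p * q⁻¹ * p⁻¹ - 1 = (q * p - p * q) * (q⁻¹ * p⁻¹) := by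
    have h2 : p * q * (q⁻¹ * p⁻¹) = 1 := by
      rw [mul_assoc, ← mul_assoc q, hqi, one_mul, hpi]
    rw [sub_mul, h2, mul_assoc (q * p)]
  have hcomm : q * p - p * q = s • (v * p - p * v) := by
    simp only [q, add_mul, mul_add, smul_mul_assoc, mul_smul_comm, Quaternion.coe_mul_eq_smul, Quaternion.mul_coe_eq_smul]
    module
  have hnorm1 : ‖q * p - p * q‖ ≤ 2 * |s| := by
    rw [hcomm, norm_smul, Real.norm_eq_abs]
    have : ‖v * p - p * v‖ ≤ 2 := by
      calc ‖v * p - p * v‖ ≤ ‖v * p‖ + ‖p * v‖ := norm_sub_le _ _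
      _ = 2 := by rw [norm_mul, norm_mul, hvn, hp]; ring
    nlinarith [abs_nonneg s, norm_nonneg (v*p - p*v)]
  have him : (q * p * q⁻¹ * p⁻¹).im = (q * p * q⁻¹ * p⁻¹ - 1).im := by
    simp
  have himle : ‖(q * p * q⁻¹ * p⁻¹ - 1).im‖ ≤ ‖q * p * q⁻¹ * p⁻¹ - 1‖ := by
    set x := q * p * q⁻¹ * p⁻¹ - 1
    have h1 : Quaternion.normSq x.im ≤ Quaternion.normSq x := by
      rw [Quaternion.normSq_def', Quaternion.normSq_def']
      simp [Quaternion.im, QuaternionAlgebra.re_im, QuaternionAlgebra.imI_im, QuaternionAlgebra.imJ_im, QuaternionAlgebra.imK_im]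
      change (0:ℝ) ^ 2 + x.imI ^ 2 + x.imJ ^ 2 + x.imK ^ 2 ≤ x.re ^ 2 + x.imI ^ 2 + x.imJ ^ 2 + x.imK ^ 2
      nlinarith [sq_nonneg x.re]
    rw [Quaternion.normSq_eq_norm_mul_self, Quaternion.normSq_eq_norm_mul_self] at h1
    nlinarith [norm_nonneg x.im, norm_nonneg x]
  calc ‖(q * p * q⁻¹ * p⁻¹).im‖ = ‖(q * p * q⁻¹ * p⁻¹ - 1).im‖ := by rw [him]
    _ ≤ ‖q * p * q⁻¹ * p⁻¹ - 1‖ := himle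
    _ = ‖(q * p - p * q) * (q⁻¹ * p⁻¹)‖ := by rw [key]
    _ = ‖q * p - p * q‖ * (‖q‖⁻¹ * ‖p‖⁻¹) := by rw [norm_mul, norm_mul, norm_inv, norm_inv]
    _ = ‖q * p - p * q‖ := by rw [hq, hp]; norm_num
    _ ≤ 2 * |s| := hnorm1
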